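/- Let μ₁, ν₁ be probability measures on a measurable space (S₁, 𝒮₁) and μ₂, ν₂ probability measures on a measurable space (S₂, 𝒮₂). Let ε₁, ε₂, δ₁, δ₂ ≥ 0 and suppose μ₁ is (ε₁, δ₁)-close to ν₁ and μ₂ is (ε₂, δ₂)-close to ν₂. Then the product measure μ₁ ⊗ μ₂ is (ε₁ + ε₂, δ₁ + δ₂)-close to ν₁ ⊗ ν₂: for every measurable set A ⊆ S₁ × S₂, (μ₁ ⊗ μ₂)(A) ≤ e^{ε₁+ε₂} (ν₁ ⊗ ν₂)(A) + δ₁ + δ₂. -/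

import Mathlib

open MeasureTheory ENNReal

lemma dp_lintegral_key {α : Type*} [MeasurableSpace α] (μ ν : Measure α)
    [IsProbabilityMeasure μ] [IsProbabilityMeasure ν]
    (c d : ℝ≥0∞) (g : α → ℝ≥0∞) (hg : Measurable g) (hg1 : ∀ x, g x ≤ 1)
    (h : ∀ A : Set α, MeasurableSet A → μ A ≤ c * ν A + d) :
    ∫⁻ x, g x ∂μ ≤ c * ∫⁻ x, g x ∂ν + d := by
  set f : α → ℝ := fun x => (g x).toReal with hf
  have hfm : Measurable f := hg.ennreal_toReal
  have hf1 : ∀ x, f x ≤ 1 := fun x => by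
    simpa using ENNReal.toReal_mono one_ne_top (hg1 x)
  have hsetm : ∀ t : ℝ, MeasurableSet {a | t < f a} := fun t =>
    measurableSet_lt measurable_const hfm
  have hmeas : ∀ m : Measure α, Measurable (fun t : ℝ => m {a | t < f a}) := by
    intro m
    have : Antitone (fun t : ℝ => m {a | t < f a}) := fun s t hst =>
      measure_mono fun a (ha : t < f a) => lt_of_le_of_lt hst ha
    exact this.measurable
  have hrepr : ∀ m : Measure α, ∫⁻ x, g x ∂m = ∫⁻ t in Set.Ioi (0:ℝ), m {a | t < f a} := by
    intro m
    have := lintegral_eq_lintegral_meas_lt m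
      (Filter.Eventually.of_forall fun x => ENNReal.toReal_nonneg) hfm.aemeasurable
    rw [← this]
    refine lintegral_congr fun x => ?_
    exact (ENNReal.ofReal_toReal (lt_of_le_of_lt (hg1 x) ENNReal.one_lt_top).ne).symm
  have hsplit : ∀ m : Measure α, ∫⁻ t in Set.Ioi (0:ℝ), m {a | t < f a}
      = ∫⁻ t in Set.Ioc (0:ℝ) 1, m {a | t < f a} := by
    intro m
    rw [← Set.Ioc_union_Ioi_eq_Ioi (zero_le_one (α := ℝ)),
      lintegral_union measurableSet_Ioi (Set.Ioc_disjoint_Ioi le_rfl)]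
    have hz : ∫⁻ t in Set.Ioi (1:ℝ), m {a | t < f a} = 0 := by
      rw [setLIntegral_eq_zero_iff measurableSet_Ioi (hmeas m)]
      refine Filter.Eventually.of_forall fun t ht => ?_
      have : {a | t < f a} = ∅ :=
        Set.eq_empty_of_forall_notMem fun a ha => absurd ha (not_lt.mpr ((hf1 a).trans ht.le))
      simp [this]
    rw [hz, add_zero]
  calc ∫⁻ x, g x ∂μ = ∫⁻ t in Set.Ioc (0:ℝ) 1, μ {a | t < f a} := by
        rw [hrepr μ, hsplit μ]
    _ ≤ ∫⁻ t in Set.Ioc (0:ℝ) 1, (c * ν {a | t < f a} + d) :=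
        lintegral_mono fun t => h _ (hsetm t)
    _ = c * (∫⁻ t in Set.Ioc (0:ℝ) 1, ν {a | t < f a}) + d := by
        rw [lintegral_add_right _ measurable_const, lintegral_const,
          lintegral_const_mul c (hmeas ν), Measure.restrict_apply_univ, Real.volume_Ioc]
        norm_num
    _ ≤ c * (∫⁻ t in Set.Ioi (0:ℝ), ν {a | t < f a}) + d :=
        add_le_add_left (mul_le_mul_right (lintegral_mono_set Set.Ioc_subset_Ioi_self) c) d
    _ = c * ∫⁻ x, g x ∂ν + d := by rw [← hrepr ν]

/-- Basic composition of differential privacy: if `μ₁` is `(ε₁, δ₁)`-close to `ν₁`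
and `μ₂` is `(ε₂, δ₂)`-close to `ν₂`, then `μ₁ ⊗ μ₂` is
`(ε₁ + ε₂, δ₁ + δ₂)`-close to `ν₁ ⊗ ν₂`. -/
theorem dp_composition
    {S₁ S₂ : Type*} [MeasurableSpace S₁] [MeasurableSpace S₂]
    (μ₁ ν₁ : Measure S₁) [IsProbabilityMeasure μ₁] [IsProbabilityMeasure ν₁]
    (μ₂ ν₂ : Measure S₂) [IsProbabilityMeasure μ₂] [IsProbabilityMeasure ν₂]
    (ε₁ ε₂ δ₁ δ₂ : ℝ) (hε₁ : 0 ≤ ε₁) (hε₂ : 0 ≤ ε₂) (hδ₁ : 0 ≤ δ₁) (hδ₂ : 0 ≤ δ₂)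
    (h₁ : ∀ A : Set S₁, MeasurableSet A →
      μ₁ A ≤ ENNReal.ofReal (Real.exp ε₁) * ν₁ A + ENNReal.ofReal δ₁)
    (h₂ : ∀ A : Set S₂, MeasurableSet A →
      μ₂ A ≤ ENNReal.ofReal (Real.exp ε₂) * ν₂ A + ENNReal.ofReal δ₂) :
    ∀ A : Set (S₁ × S₂), MeasurableSet A →
      (μ₁.prod μ₂) A ≤ ENNReal.ofReal (Real.exp (ε₁ + ε₂)) * (ν₁.prod ν₂) A
        + ENNReal.ofReal (δ₁ + δ₂) := by
  intro A hA
  set c₁ := ENNReal.ofReal (Real.exp ε₁)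
  set c₂ := ENNReal.ofReal (Real.exp ε₂)
  set d₁ := ENNReal.ofReal δ₁
  set d₂ := ENNReal.ofReal δ₂
  set g : S₁ → ℝ≥0∞ := fun x => min 1 (c₂ * ν₂ (Prod.mk x ⁻¹' A)) with hgdef
  have hνm : Measurable (fun x => ν₂ (Prod.mk x ⁻¹' A)) := measurable_measure_prodMk_left hA
  have hgm : Measurable g := measurable_const.min (hνm.const_mul c₂)
  have hg1 : ∀ x, g x ≤ 1 := fun x => min_le_left _ _
  have hpt : ∀ x, μ₂ (Prod.mk x ⁻¹' A) ≤ g x + d₂ := by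
    intro x
    have h1 : μ₂ (Prod.mk x ⁻¹' A) ≤ min 1 (c₂ * ν₂ (Prod.mk x ⁻¹' A) + d₂) :=
      le_min prob_le_one (h₂ _ (measurable_prodMk_left hA))
    calc μ₂ (Prod.mk x ⁻¹' A) ≤ min 1 (c₂ * ν₂ (Prod.mk x ⁻¹' A) + d₂) := h1
      _ ≤ min (1 + d₂) (c₂ * ν₂ (Prod.mk x ⁻¹' A) + d₂) :=
        min_le_min (le_add_right le_rfl) le_rfl
      _ = g x + d₂ := by rw [← min_add_add_right]
  have step1 : (μ₁.prod μ₂) A ≤ (∫⁻ x, g x ∂μ₁) + d₂ := by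
    rw [Measure.prod_apply hA]
    calc ∫⁻ x, μ₂ (Prod.mk x ⁻¹' A) ∂μ₁ ≤ ∫⁻ x, (g x + d₂) ∂μ₁ :=
          lintegral_mono hpt
      _ = (∫⁻ x, g x ∂μ₁) + d₂ := by
          rw [lintegral_add_right _ measurable_const, lintegral_const, measure_univ, mul_one]
  have step2 : ∫⁻ x, g x ∂μ₁ ≤ c₁ * ∫⁻ x, g x ∂ν₁ + d₁ :=
    dp_lintegral_key μ₁ ν₁ c₁ d₁ g hgm hg1 h₁
  have step3 : ∫⁻ x, g x ∂ν₁ ≤ c₂ * (ν₁.prod ν₂) A := by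
    rw [Measure.prod_apply hA, ← lintegral_const_mul c₂ hνm]
    exact lintegral_mono fun x => min_le_right _ _
  have hc : c₁ * c₂ = ENNReal.ofReal (Real.exp (ε₁ + ε₂)) := by
    rw [Real.exp_add, ENNReal.ofReal_mul (Real.exp_nonneg ε₁)]
  have hd : ENNReal.ofReal (δ₁ + δ₂) = d₁ + d₂ := ENNReal.ofReal_add hδ₁ hδ₂
  calc (μ₁.prod μ₂) A ≤ (∫⁻ x, g x ∂μ₁) + d₂ := step1
    _ ≤ (c₁ * ∫⁻ x, g x ∂ν₁ + d₁) + d₂ := add_le_add_left step2 d₂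
    _ ≤ (c₁ * (c₂ * (ν₁.prod ν₂) A) + d₁) + d₂ :=
        add_le_add_left (add_le_add_left (mul_le_mul_right step3 c₁) d₁) d₂
    _ = ENNReal.ofReal (Real.exp (ε₁ + ε₂)) * (ν₁.prod ν₂) A + ENNReal.ofReal (δ₁ + δ₂) := by
        rw [hd, ← mul_assoc, hc, add_assoc]
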